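/- Let ε ∈ ℝ and let I ⊆ ℝ be a nonempty open interval with −ε ∉ I. Define y : I → ℝ by y(v) = (1 − v²)/(v + ε)². Then the identity (v + ε)·y′(v) = −y(v) − 1 holds for all v ∈ I if and only if ε² = 1. -/

import Mathlib

/-- consistency of the reduced ODE system: with
`y(v) = (1 - v²)/(v + ε)²` on an open interval avoiding `-ε`, the identity
`(v + ε) y'(v) = -y(v) - 1` holds on `I` iff `ε² = 1`. -/
theorem consistency_iff_eps_sq_one
    (ε : ℝ) (I : Set ℝ)
    (hI : IsOpen I) (hIc : I.OrdConnected) (hIne : I.Nonempty)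
    (hε : -ε ∉ I)
    (y : ℝ → ℝ) (hy : ∀ v, y v = (1 - v^2) / (v + ε)^2) :
    (∀ v ∈ I, (v + ε) * deriv y v = -y v - 1) ↔ ε^2 = 1 := by
  have hyf : y = fun v => (1 - v^2) / (v + ε)^2 := funext hy
  have hderiv : ∀ v : ℝ, v + ε ≠ 0 →
      HasDerivAt y ((-2*v*ε - 2)/(v+ε)^3) v := by
    intro v hv
    rw [hyf]
    have h1 : HasDerivAt (fun v : ℝ => 1 - v^2) (0 - 2*v^1) v :=
      (hasDerivAt_const v 1).sub ((hasDerivAt_pow 2 v).congr_deriv (by norm_num))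
    have h2 : HasDerivAt (fun v : ℝ => (v + ε)^2) (2*(v+ε)^1*1) v :=
      ((hasDerivAt_id v).add_const ε).pow 2
    have h3 := h1.div h2 (pow_ne_zero 2 hv)
    refine h3.congr_deriv ?_
    rw [div_eq_div_iff (pow_ne_zero 2 (pow_ne_zero 2 hv)) (pow_ne_zero 3 hv)]
    ring
  constructor
  · intro h
    obtain ⟨v0, hv0⟩ := hIne
    have hv : v0 + ε ≠ 0 := by
      intro h'
      exact hε (by rwa [show -ε = v0 by linarith])
    have := h v0 hv0
    rw [(hderiv v0 hv).deriv, hy] at this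
    field_simp at this
    have h2 : (ε^2 - 1) * (v0 + ε)^3 = 0 := by linear_combination (v0 + ε)^3 * this
    rcases mul_eq_zero.mp h2 with h3 | h3
    · linarith
    · exact absurd (pow_eq_zero_iff (by norm_num) |>.mp h3) hv
  · intro h v hv
    have hv' : v + ε ≠ 0 := by
      intro h'
      exact hε (by rwa [show -ε = v by linarith])
    rw [(hderiv v hv').deriv, hy]
    field_simp
    linear_combination h
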